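/- For any compact metric spaces X and Y, the Gromov–Hausdorff distance between the hyperspaces H(X) and H(Y) (sets of nonempty closed subsets with the Hausdorff metric) is at most the Gromov–Hausdorff distance between X and Y. -/

import Mathlib

open Metric Set TopologicalSpace GromovHausdorff

instance {α : Type*} [TopologicalSpace α] [Nonempty α] :
    Nonempty (NonemptyCompacts α) :=
  ⟨⟨⟨{Classical.arbitrary α}, isCompact_singleton⟩, Set.singleton_nonempty _⟩⟩

/-- Given isometric embeddings of compact `X` and `Y` into `Z`, any compact image
`Φ '' K` admits a compact set `L` in `Y` with Hausdorff distance at most the Hausdorff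
distance of the ranges. -/
lemma aux_exists_close {Z X Y : Type*} [MetricSpace Z] [MetricSpace X] [CompactSpace X]
    [MetricSpace Y] [CompactSpace Y] [Nonempty Y] {Φ : X → Z} {Ψ : Y → Z}
    (hΦ : Isometry Φ) (hΨ : Isometry Ψ)
    (hfin : EMetric.hausdorffEdist (range Φ) (range Ψ) ≠ ⊤) (K : NonemptyCompacts X) :
    ∃ L : NonemptyCompacts Y,
      hausdorffDist (Φ '' K) (Ψ '' L) ≤ hausdorffDist (range Φ) (range Ψ) := by
  set r := hausdorffDist (range Φ) (range Ψ) with hr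
  have hr0 : 0 ≤ r := hausdorffDist_nonneg
  set A : Set Z := Φ '' K with hA
  have hAcomp : IsCompact A := K.isCompact.image hΦ.continuous
  have hAne : A.Nonempty := K.nonempty.image _
  have hRΨcomp : IsCompact (range Ψ) := isCompact_range hΨ.continuous
  -- the candidate set in Y
  set L' : Set Y := {y : Y | infDist (Ψ y) A ≤ r} with hL'
  have hL'closed : IsClosed L' := by
    have : Continuous fun y : Y => infDist (Ψ y) A :=
      (continuous_infDist_pt A).comp hΨ.continuous
    exact isClosed_le this continuous_const
  have hL'comp : IsCompact L' := hL'closed.isCompact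
  -- for each x ∈ K, there is a close point of L'
  have key : ∀ x ∈ (K : Set X), ∃ y ∈ L', dist (Φ x) (Ψ y) ≤ r := by
    intro x hx
    have h1 : infDist (Φ x) (range Ψ) ≤ r :=
      infDist_le_hausdorffDist_of_mem (mem_range_self x) hfin
    obtain ⟨z, hz, hzd⟩ := hRΨcomp.exists_infDist_eq_dist (range_nonempty Ψ) (Φ x)
    obtain ⟨y, rfl⟩ := hz
    refine ⟨y, ?_, ?_⟩
    · have : infDist (Ψ y) A ≤ dist (Ψ y) (Φ x) :=
        infDist_le_dist_of_mem (mem_image_of_mem Φ hx)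
      calc infDist (Ψ y) A ≤ dist (Ψ y) (Φ x) := this
        _ = dist (Φ x) (Ψ y) := dist_comm _ _
        _ ≤ r := by rw [← hzd]; exact h1
    · rw [← hzd]; exact h1
  have hL'ne : L'.Nonempty := by
    obtain ⟨x, hx⟩ := K.nonempty
    obtain ⟨y, hy, -⟩ := key x hx
    exact ⟨y, hy⟩
  refine ⟨⟨⟨L', hL'comp⟩, hL'ne⟩, ?_⟩
  apply hausdorffDist_le_of_infDist hr0
  · rintro z ⟨x, hx, rfl⟩
    obtain ⟨y, hy, hd⟩ := key x hx
    exact le_trans (infDist_le_dist_of_mem (mem_image_of_mem Ψ hy)) hd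
  · rintro z ⟨y, hy, rfl⟩
    exact hy

theorem stmt_5 (X : Type*) (Y : Type*) [MetricSpace X] [CompactSpace X] [Nonempty X]
    [MetricSpace Y] [CompactSpace Y] [Nonempty Y] :
    ghDist (NonemptyCompacts X) (NonemptyCompacts Y) ≤ ghDist X Y := by
  set Z := OptimalGHCoupling X Y
  set Φ : X → Z := optimalGHInjl X Y with hΦdef
  set Ψ : Y → Z := optimalGHInjr X Y with hΨdef
  have hΦ : Isometry Φ := isometry_optimalGHInjl X Y
  have hΨ : Isometry Ψ := isometry_optimalGHInjr X Y
  have hfin : EMetric.hausdorffEdist (range Φ) (range Ψ) ≠ ⊤ :=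
    hausdorffEdist_ne_top_of_nonempty_of_bounded (range_nonempty Φ) (range_nonempty Ψ)
      (isCompact_range hΦ.continuous).isBounded (isCompact_range hΨ.continuous).isBounded
  set r := hausdorffDist (range Φ) (range Ψ) with hr
  have hr0 : 0 ≤ r := hausdorffDist_nonneg
  -- the induced maps on hyperspaces
  set F : NonemptyCompacts X → NonemptyCompacts Z :=
    fun K => ⟨⟨Φ '' K, K.isCompact.image hΦ.continuous⟩, K.nonempty.image _⟩ with hF
  set G : NonemptyCompacts Y → NonemptyCompacts Z :=
    fun K => ⟨⟨Ψ '' K, K.isCompact.image hΨ.continuous⟩, K.nonempty.image _⟩ with hG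
  have hFdist : ∀ K K', dist (F K) (F K') = dist K K' := by
    intro K K'
    rw [NonemptyCompacts.dist_eq, NonemptyCompacts.dist_eq]
    exact hausdorffDist_image hΦ
  have hGdist : ∀ K K', dist (G K) (G K') = dist K K' := by
    intro K K'
    rw [NonemptyCompacts.dist_eq, NonemptyCompacts.dist_eq]
    exact hausdorffDist_image hΨ
  have hFiso : Isometry F := Isometry.of_dist_eq hFdist
  have hGiso : Isometry G := Isometry.of_dist_eq hGdist
  have step1 : ghDist (NonemptyCompacts X) (NonemptyCompacts Y) ≤
      hausdorffDist (range F) (range G) := ghDist_le_hausdorffDist hFiso hGiso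
  have step2 : hausdorffDist (range F) (range G) ≤ r := by
    apply hausdorffDist_le_of_mem_dist hr0
    · rintro _ ⟨K, rfl⟩
      obtain ⟨L, hL⟩ := aux_exists_close hΦ hΨ hfin K
      refine ⟨G L, mem_range_self L, ?_⟩
      rw [NonemptyCompacts.dist_eq]
      exact hL
    · rintro _ ⟨K, rfl⟩
      have hfin' : EMetric.hausdorffEdist (range Ψ) (range Φ) ≠ ⊤ := by
        show Metric.hausdorffEDist (range Ψ) (range Φ) ≠ ⊤
        rwa [EMetric.hausdorffEdist_comm]
      obtain ⟨L, hL⟩ := aux_exists_close hΨ hΦ hfin' K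
      refine ⟨F L, mem_range_self L, ?_⟩
      rw [NonemptyCompacts.dist_eq]
      calc hausdorffDist ((G K : Set Z)) ((F L : Set Z))
          = hausdorffDist (Ψ '' K) (Φ '' L) := rfl
        _ ≤ hausdorffDist (range Ψ) (range Φ) := hL
        _ = r := hausdorffDist_comm
  calc ghDist (NonemptyCompacts X) (NonemptyCompacts Y) ≤ hausdorffDist (range F) (range G) := step1
    _ ≤ r := step2
    _ = ghDist X Y := hausdorffDist_optimal
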